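/- Let F : [0,∞) → ℝ be any function, let β > 0, and suppose r* > 0 maximizes r ↦ F(r) − β·r over [0,∞). Then r* also maximizes r ↦ F(r) − (β/(2r*))·r² over [0,∞). -/

import Mathlib

/-- Let `F : [0,∞) → ℝ` be any function (e.g. the IB curve), `β > 0`, and
suppose `r* > 0` maximizes `r ↦ F(r) - β r` over `[0,∞)`.  Then `r*` also maximizes the
squared-IB objective `r ↦ F(r) - (β/(2r*)) r²` over `[0,∞)`. -/
theorem IB_maximizer_is_squaredIB_maximizer (F : ℝ → ℝ) (β rstar : ℝ)
    (hβ : 0 < β) (hrstar : 0 < rstar)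
    (hmax : ∀ r, 0 ≤ r → F r - β * r ≤ F rstar - β * rstar) :
    ∀ r, 0 ≤ r → F r - (β / (2 * rstar)) * r ^ 2 ≤
      F rstar - (β / (2 * rstar)) * rstar ^ 2 := by
  intro r hr
  have h := hmax r hr
  have hq : β * r - (β / (2 * rstar)) * r ^ 2 ≤ β * rstar - (β / (2 * rstar)) * rstar ^ 2 := by
    rw [div_mul_eq_mul_div, div_mul_eq_mul_div, sub_div' (by positivity), sub_div' (by positivity), div_le_div_iff₀ (by positivity) (by positivity)]
    nlinarith [sq_nonneg (rstar - r), mul_pos hβ hrstar]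
  linarith
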